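/- Let n, t ∈ ℕ with t + 1 ≤ n, let a ∈ ℝⁿ and b ∈ ℝ, and let g(x) = ∑_{i=1}^n a_i x_i − b; for I ⊆ [n] write g(x_I) = ∑_{i ∈ I} a_i − b. Let α > 0 and set y_I = α for every I ⊆ [n] with |I| ≤ t + 1 and y_I = 0 otherwise. Then the P_t(n) × P_t(n) matrix ∑_{I ⊆ [n]} g(x_I) y_I Z_I Z_Iᵀ (with t-zeta vectors Z_I) is positive semidefinite if and only if for every vector v ∈ ℝ^{P_t(n)}: ∑_{I ⊆ [n], |I| ≤ t} g(x_I) v_I² + ∑_{J ⊆ [n], |J| = t+1} ( ∑_{I ⊆ J, |I| ≤ t} (−1)^{|I|} v_I )² g(x_J) ≥ 0. -/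

import Mathlib

open Finset Matrix

noncomputable def zeta (n d : ℕ) (I : Finset (Fin n)) :
    {J : Finset (Fin n) // J.card ≤ d} → ℝ :=
  fun J => if (J : Finset (Fin n)) ⊆ I then 1 else 0

noncomputable def ext' (n d : ℕ) (v : {K : Finset (Fin n) // K.card ≤ d} → ℝ) :
    Finset (Fin n) → ℝ :=
  fun K => if h : K.card ≤ d then v ⟨K, h⟩ else 0

noncomputable def Wt (n d : ℕ) (v : {K : Finset (Fin n) // K.card ≤ d} → ℝ)
    (I : Finset (Fin n)) : ℝ :=
  ∑ K ∈ I.powerset, ext' n d v K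

theorem quadform {ι κ : Type*} [Fintype ι] [Fintype κ] (c : κ → ℝ) (z : κ → ι → ℝ) (x : ι → ℝ) :
    x ⬝ᵥ ((∑ k, c k • Matrix.vecMulVec (z k) (z k)) *ᵥ x)
      = ∑ k, c k * (∑ i, z k i * x i)^2 := by
  simp only [dotProduct, mulVec, vecMulVec, Matrix.sum_apply, Matrix.smul_apply,
    Matrix.of_apply, smul_eq_mul, Finset.mul_sum, Finset.sum_mul, sq]
  have h1 : ∀ i : ι, (∑ j : ι, ∑ k : κ, x i * (c k * (z k i * z k j) * x j))
      = ∑ k : κ, ∑ j : ι, x i * (c k * (z k i * z k j) * x j) := fun i =>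
    Finset.sum_comm (s := univ) (t := univ)
      (f := fun j k => x i * (c k * (z k i * z k j) * x j))
  simp only [h1]
  rw [Finset.sum_comm (s := univ) (t := univ) (f := fun i (k : κ) =>
    ∑ j : ι, x i * (c k * (z k i * z k j) * x j))]
  refine Finset.sum_congr rfl fun k _ => ?_
  rw [Finset.sum_comm (s := univ) (t := univ)
    (f := fun i j => x i * (c k * (z k i * z k j) * x j))]
  exact Finset.sum_congr rfl fun i _ => Finset.sum_congr rfl fun j _ => by ring

theorem neg_one_pow_powerset {m : ℕ} (J : Finset (Fin m)) :
    ∑ S ∈ J.powerset, (-1:ℝ)^S.card = if J = ∅ then 1 else 0 := by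
  have := Finset.sum_powerset_neg_one_pow_card (x := J)
  have h2 : ((∑ S ∈ J.powerset, (-1:ℤ)^S.card : ℤ) : ℝ)
      = ∑ S ∈ J.powerset, (-1:ℝ)^S.card := by push_cast; ring_nf
  rw [← h2, this]
  split_ifs <;> norm_num

theorem core1 {m : ℕ} (K J : Finset (Fin m)) (h : K ⊆ J) :
    ∑ I ∈ J.powerset, (if K ⊆ I then (-1:ℝ)^I.card else 0)
      = if K = J then (-1:ℝ)^J.card else 0 := by
  rw [← Finset.sum_filter]
  have hb : ∑ I ∈ J.powerset.filter (fun I => K ⊆ I), (-1:ℝ)^I.card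
      = ∑ S ∈ (J \ K).powerset, (-1:ℝ)^(S ∪ K).card := by
    refine Finset.sum_nbij' (fun I => I \ K) (fun S => S ∪ K) ?_ ?_ ?_ ?_ ?_
    · intro I hI
      simp only [mem_filter, mem_powerset] at hI
      exact Finset.mem_powerset.2 (Finset.sdiff_subset_sdiff hI.1 Finset.Subset.rfl)
    · intro S hS
      simp only [mem_powerset] at hS
      refine Finset.mem_filter.2 ⟨Finset.mem_powerset.2 ?_, Finset.subset_union_right⟩
      exact Finset.union_subset (hS.trans Finset.sdiff_subset) h
    · intro I hI
      simp only [mem_filter, mem_powerset] at hI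
      exact Finset.sdiff_union_of_subset hI.2
    · intro S hS
      simp only [mem_powerset] at hS
      have : Disjoint S K := Finset.disjoint_of_subset_left hS Finset.sdiff_disjoint
      show (S ∪ K) \ K = S
      rw [Finset.union_sdiff_cancel_right this]
    · intro I hI
      simp only [mem_filter, mem_powerset] at hI
      rw [Finset.sdiff_union_of_subset hI.2]
  rw [hb]
  have hc : ∀ S ∈ (J \ K).powerset, (-1:ℝ)^(S ∪ K).card = (-1:ℝ)^S.card * (-1:ℝ)^K.card := by
    intro S hS
    simp only [mem_powerset] at hS
    have hd : Disjoint S K := Finset.disjoint_of_subset_left hS Finset.sdiff_disjoint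
    rw [Finset.card_union_of_disjoint hd, pow_add]
  rw [Finset.sum_congr rfl hc, ← Finset.sum_mul, neg_one_pow_powerset]
  have he : J \ K = ∅ ↔ K = J := by
    rw [Finset.sdiff_eq_empty_iff_subset]
    exact ⟨fun h2 => le_antisymm h h2, fun h2 => h2 ▸ Finset.Subset.rfl⟩
  by_cases hk : K = J
  · rw [if_pos (he.2 hk), if_pos hk, one_mul, hk]
  · rw [if_neg (fun h2 => hk (he.1 h2)), if_neg hk, zero_mul]

theorem swap_pow {m : ℕ} (J : Finset (Fin m)) (F : Finset (Fin m) → Finset (Fin m) → ℝ) :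
    ∑ K ∈ J.powerset, ∑ L ∈ K.powerset, F K L
      = ∑ L ∈ J.powerset, ∑ K ∈ J.powerset, (if L ⊆ K then F K L else 0) := by
  have h1 : ∀ K ∈ J.powerset, ∑ L ∈ K.powerset, F K L
      = ∑ L ∈ J.powerset, (if L ⊆ K then F K L else 0) := by
    intro K hK
    simp only [mem_powerset] at hK
    rw [← Finset.sum_filter]
    refine (Finset.sum_congr ?_ fun _ _ => rfl).symm
    ext L
    simp only [mem_filter, mem_powerset]
    exact ⟨fun ⟨_, h2⟩ => h2, fun h2 => ⟨h2.trans hK, h2⟩⟩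
  rw [Finset.sum_congr rfl h1, Finset.sum_comm]

theorem sub_to_pow {m d : ℕ} (v : {K : Finset (Fin m) // K.card ≤ d} → ℝ) (I : Finset (Fin m)) :
    ∑ K : {K : Finset (Fin m) // K.card ≤ d}, (if K.1 ⊆ I then v K else 0)
      = ∑ K ∈ I.powerset, (if h : K.card ≤ d then v ⟨K, h⟩ else 0) := by
  have h1 : ∑ K : {K : Finset (Fin m) // K.card ≤ d}, (if K.1 ⊆ I then v K else 0)
      = ∑ K ∈ univ.filter (fun K : Finset (Fin m) => K.card ≤ d),
          (if K ⊆ I then (if h : K.card ≤ d then v ⟨K, h⟩ else 0) else 0) := by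
    rw [Finset.sum_subtype (p := fun K : Finset (Fin m) => K.card ≤ d) (univ.filter fun K : Finset (Fin m) => K.card ≤ d) (by simp)
      (fun K => if K ⊆ I then (if h : K.card ≤ d then v ⟨K, h⟩ else 0) else 0)]
    refine Finset.sum_congr rfl fun K _ => ?_
    rw [dif_pos K.2]
  rw [h1, Finset.sum_filter]
  have h2 : ∑ K ∈ I.powerset, (if h : K.card ≤ d then v ⟨K, h⟩ else 0)
      = ∑ K : Finset (Fin m), (if K ⊆ I then (if h : K.card ≤ d then v ⟨K, h⟩ else 0) else 0) := by
    rw [← Finset.sum_filter]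
    refine Finset.sum_congr ?_ fun _ _ => rfl
    ext K; simp
  rw [h2]
  refine Finset.sum_congr rfl fun K _ => ?_
  by_cases hd : K.card ≤ d
  · rw [if_pos hd]
  · rw [if_neg hd, dif_neg hd]
    split_ifs <;> rfl

theorem zeta_dot {n d : ℕ} (v : {K : Finset (Fin n) // K.card ≤ d} → ℝ) (I : Finset (Fin n)) :
    ∑ K : {K : Finset (Fin n) // K.card ≤ d}, zeta n d I K * v K = Wt n d v I := by
  simp only [zeta, ite_mul, one_mul, zero_mul]
  exact sub_to_pow v I

theorem signed {n d : ℕ} (v : {K : Finset (Fin n) // K.card ≤ d} → ℝ)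
    (J : Finset (Fin n)) (hJ : J.card = d + 1) :
    (∑ I ∈ Finset.univ.filter
        (fun I : {K : Finset (Fin n) // K.card ≤ d} => (I : Finset (Fin n)) ⊆ J),
      (-1 : ℝ) ^ (I : Finset (Fin n)).card * Wt n d v I) ^ 2 = (Wt n d v J) ^ 2 := by
  have hT : ∑ I ∈ Finset.univ.filter
        (fun I : {K : Finset (Fin n) // K.card ≤ d} => (I : Finset (Fin n)) ⊆ J),
      (-1 : ℝ) ^ (I : Finset (Fin n)).card * Wt n d v I
      = 0 - (-1:ℝ)^J.card * Wt n d v J := by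
    rw [Finset.sum_filter]
    rw [sub_to_pow (fun I => (-1 : ℝ) ^ (I : Finset (Fin n)).card * Wt n d v I) J]
    have step3 : ∀ K ∈ J.powerset,
        (if h : K.card ≤ d then (-1:ℝ)^K.card * Wt n d v K else 0)
          = (-1:ℝ)^K.card * Wt n d v K
            - (if K = J then (-1:ℝ)^K.card * Wt n d v K else 0) := by
      intro K hK
      by_cases hk : K = J
      · subst hk
        rw [dif_neg (by omega), if_pos rfl]; ring
      · have hlt : K ⊂ J := Finset.ssubset_iff_subset_ne.2 ⟨Finset.mem_powerset.1 hK, hk⟩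
        have : K.card < J.card := Finset.card_lt_card hlt
        rw [dif_pos (by omega), if_neg hk]; ring
    rw [Finset.sum_congr rfl step3, Finset.sum_sub_distrib]
    have step4 : ∑ K ∈ J.powerset, (if K = J then (-1:ℝ)^K.card * Wt n d v K else 0)
        = (-1:ℝ)^J.card * Wt n d v J := by
      rw [Finset.sum_ite_eq' J.powerset J (fun K => (-1:ℝ)^K.card * Wt n d v K),
        if_pos (Finset.mem_powerset_self J)]
    have step5 : ∑ K ∈ J.powerset, (-1:ℝ)^K.card * Wt n d v K = 0 := by
      simp only [Wt, Finset.mul_sum]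
      rw [swap_pow J (fun K L => (-1:ℝ)^K.card * ext' n d v L)]
      have inner : ∀ L ∈ J.powerset,
          (∑ K ∈ J.powerset, if L ⊆ K then (-1:ℝ)^K.card * ext' n d v L else 0)
            = ext' n d v L * (if L = J then (-1:ℝ)^J.card else 0) := by
        intro L hL
        have : ∀ K ∈ J.powerset, (if L ⊆ K then (-1:ℝ)^K.card * ext' n d v L else 0)
            = ext' n d v L * (if L ⊆ K then (-1:ℝ)^K.card else 0) := by
          intro K _; split_ifs <;> ring
        rw [Finset.sum_congr rfl this, ← Finset.mul_sum,
          core1 L J (Finset.mem_powerset.1 hL)]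
      rw [Finset.sum_congr rfl inner]
      have : ∀ L ∈ J.powerset, ext' n d v L * (if L = J then (-1:ℝ)^J.card else 0)
          = if L = J then ext' n d v L * (-1:ℝ)^J.card else 0 := by
        intro L _; split_ifs <;> ring
      rw [Finset.sum_congr rfl this,
        Finset.sum_ite_eq' J.powerset J (fun L => ext' n d v L * (-1:ℝ)^J.card),
        if_pos (Finset.mem_powerset_self J)]
      have : ext' n d v J = 0 := by
        rw [ext', dif_neg (by omega)]
      rw [this, zero_mul]
    rw [step4, step5]
  rw [hT]
  have h1 : ((-1:ℝ)^J.card)^2 = 1 := by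
    rw [← pow_mul, mul_comm, pow_mul, neg_one_sq, one_pow]
  calc (0 - (-1:ℝ)^J.card * Wt n d v J)^2
      = ((-1:ℝ)^J.card)^2 * (Wt n d v J)^2 := by ring
    _ = (Wt n d v J)^2 := by rw [h1, one_mul]

theorem mobius_surj {n d : ℕ} (u : {K : Finset (Fin n) // K.card ≤ d} → ℝ) :
    ∃ v : {K : Finset (Fin n) // K.card ≤ d} → ℝ,
      ∀ I : {K : Finset (Fin n) // K.card ≤ d}, Wt n d v I = u I := by
  refine ⟨fun K => ∑ L ∈ (K : Finset (Fin n)).powerset,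
    (-1:ℝ)^(((K : Finset (Fin n)) \ L).card) * ext' n d u L, fun I => ?_⟩
  set v : {K : Finset (Fin n) // K.card ≤ d} → ℝ := fun K =>
    ∑ L ∈ (K : Finset (Fin n)).powerset,
      (-1:ℝ)^(((K : Finset (Fin n)) \ L).card) * ext' n d u L with hv
  show Wt n d v I = u I
  have hext : ∀ K ∈ (I : Finset (Fin n)).powerset,
      ext' n d v K = ∑ L ∈ K.powerset, (-1:ℝ)^((K \ L).card) * ext' n d u L := by
    intro K hK
    have hKd : K.card ≤ d :=
      le_trans (Finset.card_le_card (Finset.mem_powerset.1 hK)) I.2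
    rw [ext', dif_pos hKd]
  rw [Wt, Finset.sum_congr rfl hext,
    swap_pow (I : Finset (Fin n)) (fun K L => (-1:ℝ)^((K \ L).card) * ext' n d u L)]
  have inner : ∀ L ∈ (I : Finset (Fin n)).powerset,
      (∑ K ∈ (I : Finset (Fin n)).powerset,
        if L ⊆ K then (-1:ℝ)^((K \ L).card) * ext' n d u L else 0)
        = (ext' n d u L * (-1:ℝ)^L.card) * (if L = (I : Finset (Fin n)) then (-1:ℝ)^(I : Finset (Fin n)).card else 0) := by
    intro L hL
    have hfix : ∀ K ∈ (I : Finset (Fin n)).powerset,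
        (if L ⊆ K then (-1:ℝ)^((K \ L).card) * ext' n d u L else 0)
          = (ext' n d u L * (-1:ℝ)^L.card) * (if L ⊆ K then (-1:ℝ)^K.card else 0) := by
      intro K _
      by_cases h : L ⊆ K
      · rw [if_pos h, if_pos h]
        have hc : (K \ L).card + L.card = K.card := Finset.card_sdiff_add_card_eq_card h
        have h2 : (-1:ℝ)^L.card * (-1:ℝ)^L.card = 1 := by
          rw [← pow_add, ← two_mul, pow_mul, neg_one_sq, one_pow]
        have h4 : (-1:ℝ)^K.card = (-1:ℝ)^((K\L).card) * (-1:ℝ)^L.card := by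
          rw [← pow_add, hc]
        rw [h4, show (ext' n d u L * (-1:ℝ)^L.card) * ((-1:ℝ)^((K\L).card) * (-1:ℝ)^L.card)
            = (-1:ℝ)^((K\L).card) * ext' n d u L * ((-1:ℝ)^L.card * (-1:ℝ)^L.card) from by ring,
          h2, mul_one]
      · rw [if_neg h, if_neg h, mul_zero]
    rw [Finset.sum_congr rfl hfix, ← Finset.mul_sum,
      core1 L (I : Finset (Fin n)) (Finset.mem_powerset.1 hL)]
  rw [Finset.sum_congr rfl inner]
  have hfin : ∀ L ∈ (I : Finset (Fin n)).powerset,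
      (ext' n d u L * (-1:ℝ)^L.card) * (if L = (I : Finset (Fin n)) then (-1:ℝ)^(I : Finset (Fin n)).card else 0)
        = if L = (I : Finset (Fin n)) then (ext' n d u L * (-1:ℝ)^L.card) * (-1:ℝ)^(I : Finset (Fin n)).card else 0 := by
    intro L _; split_ifs <;> ring
  rw [Finset.sum_congr rfl hfin,
    Finset.sum_ite_eq' (I : Finset (Fin n)).powerset (I : Finset (Fin n))
      (fun L => (ext' n d u L * (-1:ℝ)^L.card) * (-1:ℝ)^(I : Finset (Fin n)).card),
    if_pos (Finset.mem_powerset_self _)]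
  have h2 : (-1:ℝ)^(I : Finset (Fin n)).card * (-1:ℝ)^(I : Finset (Fin n)).card = 1 := by
    rw [← pow_add, ← two_mul, pow_mul, neg_one_sq, one_pow]
  have h3 : ext' n d u (I : Finset (Fin n)) = u I := by
    rw [ext', dif_pos I.2]
  calc (ext' n d u (I : Finset (Fin n)) * (-1:ℝ)^(I : Finset (Fin n)).card) * (-1:ℝ)^(I : Finset (Fin n)).card
      = ext' n d u (I : Finset (Fin n)) * ((-1:ℝ)^(I : Finset (Fin n)).card * (-1:ℝ)^(I : Finset (Fin n)).card) := by ring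
    _ = u I := by rw [h2, mul_one, h3]

theorem stmt_11 (n t : ℕ) (ht : t + 1 ≤ n) (a : Fin n → ℝ) (b : ℝ)
    (α : ℝ) (hα : 0 < α) :
    let g : Finset (Fin n) → ℝ := fun I => (∑ i ∈ I, a i) - b
    let y : Finset (Fin n) → ℝ := fun I => if I.card ≤ t + 1 then α else 0
    (∑ I : Finset (Fin n),
        (g I * y I) • Matrix.vecMulVec (zeta n t I) (zeta n t I)).PosSemidef ↔
      ∀ v : {K : Finset (Fin n) // K.card ≤ t} → ℝ,
        0 ≤ (∑ I : {K : Finset (Fin n) // K.card ≤ t}, g I.1 * v I ^ 2) +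
          ∑ J ∈ Finset.powersetCard (t + 1) (Finset.univ : Finset (Fin n)),
            (∑ I ∈ Finset.univ.filter
                (fun I : {K : Finset (Fin n) // K.card ≤ t} => (I : Finset (Fin n)) ⊆ J),
              (-1 : ℝ) ^ I.1.card * v I) ^ 2 * g J := by
  intro g y
  have hpcard : Finset.powersetCard (t + 1) (Finset.univ : Finset (Fin n))
      = Finset.univ.filter (fun I : Finset (Fin n) => I.card = t + 1) := by
    ext I; simp [Finset.mem_powersetCard]
  have key : ∀ v : {K : Finset (Fin n) // K.card ≤ t} → ℝ,
      v ⬝ᵥ ((∑ I : Finset (Fin n),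
          (g I * y I) • Matrix.vecMulVec (zeta n t I) (zeta n t I)) *ᵥ v)
        = α * ((∑ I : {K : Finset (Fin n) // K.card ≤ t}, g I.1 * (Wt n t v I.1) ^ 2) +
          ∑ J ∈ Finset.powersetCard (t + 1) (Finset.univ : Finset (Fin n)),
            (∑ I ∈ Finset.univ.filter
                (fun I : {K : Finset (Fin n) // K.card ≤ t} => (I : Finset (Fin n)) ⊆ J),
              (-1 : ℝ) ^ I.1.card * Wt n t v I.1) ^ 2 * g J) := by
    intro v
    rw [quadform (fun I : Finset (Fin n) => g I * y I) (zeta n t) v]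
    have hz : ∀ I : Finset (Fin n), (g I * y I) * (∑ K, zeta n t I K * v K) ^ 2
        = (if I.card ≤ t then α * (g I * (Wt n t v I) ^ 2) else 0)
          + (if I.card = t + 1 then α * (g I * (Wt n t v I) ^ 2) else 0) := by
      intro I
      rw [zeta_dot v I]
      show (g I * (if I.card ≤ t + 1 then α else 0)) * (Wt n t v I) ^ 2 = _
      split_ifs <;> first | ring1 | (exfalso; omega)
    rw [Finset.sum_congr rfl fun I _ => hz I, Finset.sum_add_distrib]
    have hfirst : (∑ I : Finset (Fin n), if I.card ≤ t then α * (g I * (Wt n t v I) ^ 2) else 0)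
        = α * ∑ I : {K : Finset (Fin n) // K.card ≤ t}, g I.1 * (Wt n t v I.1) ^ 2 := by
      rw [← Finset.sum_filter,
        Finset.sum_subtype (p := fun K : Finset (Fin n) => K.card ≤ t)
          (Finset.univ.filter fun K : Finset (Fin n) => K.card ≤ t) (by simp)
          (fun I => α * (g I * (Wt n t v I) ^ 2)),
        Finset.mul_sum]
    have hsecond : (∑ I : Finset (Fin n), if I.card = t + 1 then α * (g I * (Wt n t v I) ^ 2) else 0)
        = α * ∑ J ∈ Finset.powersetCard (t + 1) (Finset.univ : Finset (Fin n)),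
            (∑ I ∈ Finset.univ.filter
                (fun I : {K : Finset (Fin n) // K.card ≤ t} => (I : Finset (Fin n)) ⊆ J),
              (-1 : ℝ) ^ I.1.card * Wt n t v I.1) ^ 2 * g J := by
      rw [← Finset.sum_filter, ← hpcard, Finset.mul_sum]
      refine Finset.sum_congr rfl fun J hJ => ?_
      have hJc : J.card = t + 1 := by
        rw [hpcard] at hJ
        exact (Finset.mem_filter.1 hJ).2
      rw [signed v J hJc]
      ring
    rw [hfirst, hsecond, mul_add]
  rw [Matrix.posSemidef_iff_dotProduct_mulVec]
  constructor
  · rintro ⟨-, hq⟩ u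
    obtain ⟨v, hv⟩ := mobius_surj u
    have h0 := hq v
    rw [star_trivial, key v] at h0
    have h1 := (mul_nonneg_iff_of_pos_left hα).1 h0
    simp only [hv] at h1
    exact h1
  · intro hr
    constructor
    · show _ = _
      rw [Matrix.conjTranspose_sum]
      refine Finset.sum_congr rfl fun I _ => ?_
      ext i j
      simp only [Matrix.conjTranspose_apply, Matrix.smul_apply, Matrix.vecMulVec_apply,
        smul_eq_mul, star_trivial]
      ring
    · intro x
      rw [star_trivial, key x]
      exact mul_nonneg hα.le (hr fun I => Wt n t x I.1)
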